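/- Let n ≥ 1, α > 0, S > 0, z ∈ ℝⁿ, and m ∈ {0, 1, …, n}. For l ∈ {0, 1, …, n} let p(l) ∈ ℝⁿ denote the prefix indicator vector with p(l)_k = 1 for k ≤ l and p(l)_k = 0 for k > l, and set y := p(m). Then the supremum over u ∈ ℝⁿ and l ∈ {0, 1, …, n} of [ ⟨u, p(l)⟩ − α( ‖u − z‖² + S ‖p(l) − y‖² ) ] equals ⟨z, y⟩ + max_{l ∈ {0,…,n}} [ l/(4α) + ( Σ_{k=1}^{l} z_k − Σ_{k=1}^{m} z_k ) − α S |l − m| ]. -/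

import Mathlib

lemma sum_ind (n l : ℕ) (hl : l ≤ n) :
    ∑ k : Fin n, (if (k : ℕ) < l then (1 : ℝ) else 0) = l := by
  rw [Fin.sum_univ_eq_sum_range (fun i => if i < l then (1 : ℝ) else 0)]
  rw [← Finset.sum_subset (Finset.range_subset_range.2 hl)
    (by intro i hi hni; simp [Finset.mem_range] at hni ⊢; omega)]
  calc ∑ i ∈ Finset.range l, (if i < l then (1 : ℝ) else 0)
      = ∑ _i ∈ Finset.range l, (1 : ℝ) := by
        apply Finset.sum_congr rfl; intro i hi; simp [Finset.mem_range.mp hi]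
    _ = l := by simp

lemma sum_ind_z (n l : ℕ) (z : Fin n → ℝ) :
    ∑ k : Fin n, z k * (if (k : ℕ) < l then (1 : ℝ) else 0)
      = ∑ k : Fin n, if (k : ℕ) < l then z k else 0 := by
  apply Finset.sum_congr rfl; intro k _; split_ifs <;> ring

lemma sum_diff_sq (n l m : ℕ) (hl : l ≤ n) (hm : m ≤ n) :
    ∑ k : Fin n, ((if (k : ℕ) < l then (1 : ℝ) else 0)
        - (if (k : ℕ) < m then (1 : ℝ) else 0)) ^ 2 = |(l : ℝ) - (m : ℝ)| := by
  rcases le_total m l with h | h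
  · have e : ∀ k : Fin n, ((if (k : ℕ) < l then (1 : ℝ) else 0)
        - (if (k : ℕ) < m then (1 : ℝ) else 0)) ^ 2
        = (if (k : ℕ) < l then (1 : ℝ) else 0) - (if (k : ℕ) < m then (1 : ℝ) else 0) := by
      intro k; split_ifs <;> first | (exfalso; omega) | ring
    rw [Finset.sum_congr rfl (fun k _ => e k), Finset.sum_sub_distrib,
      sum_ind n l hl, sum_ind n m hm,
      abs_of_nonneg (sub_nonneg.2 (Nat.cast_le.2 h))]
  · have e : ∀ k : Fin n, ((if (k : ℕ) < l then (1 : ℝ) else 0)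
        - (if (k : ℕ) < m then (1 : ℝ) else 0)) ^ 2
        = (if (k : ℕ) < m then (1 : ℝ) else 0) - (if (k : ℕ) < l then (1 : ℝ) else 0) := by
      intro k; split_ifs <;> first | (exfalso; omega) | ring
    rw [Finset.sum_congr rfl (fun k _ => e k), Finset.sum_sub_distrib,
      sum_ind n l hl, sum_ind n m hm,
      abs_of_nonpos (sub_nonpos.2 (Nat.cast_le.2 h))]
    ring

theorem stmt9 (n : ℕ) (hn : 1 ≤ n) (α S : ℝ) (hα : 0 < α) (hS : 0 < S)
    (z : Fin n → ℝ) (m : ℕ) (hm : m ≤ n) :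
    sSup {v : ℝ | ∃ u : Fin n → ℝ, ∃ l ≤ n,
        v = (∑ k : Fin n, u k * (if (k : ℕ) < l then (1 : ℝ) else 0))
            - α * ((∑ k, (u k - z k) ^ 2)
              + S * ∑ k : Fin n, ((if (k : ℕ) < l then (1 : ℝ) else 0)
                  - (if (k : ℕ) < m then (1 : ℝ) else 0)) ^ 2)} =
      (∑ k : Fin n, z k * (if (k : ℕ) < m then (1 : ℝ) else 0))
        + (Finset.range (n + 1)).sup' Finset.nonempty_range_add_one (fun l =>
            (l : ℝ) / (4 * α)
              + ((∑ k : Fin n, if (k : ℕ) < l then z k else 0)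
                  - ∑ k : Fin n, if (k : ℕ) < m then z k else 0)
              - α * S * |(l : ℝ) - (m : ℝ)|) := by
  set F : ℕ → ℝ := fun l =>
      (l : ℝ) / (4 * α)
        + ((∑ k : Fin n, if (k : ℕ) < l then z k else 0)
            - ∑ k : Fin n, if (k : ℕ) < m then z k else 0)
        - α * S * |(l : ℝ) - (m : ℝ)| with hF
  apply IsGreatest.csSup_eq
  constructor
  · -- membership
    obtain ⟨l₀, hl₀mem, hsup⟩ :=
      Finset.exists_mem_eq_sup' (Finset.nonempty_range_add_one (n := n)) F
    have hl₀ : l₀ ≤ n := Finset.mem_range_succ_iff.mp hl₀mem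
    refine ⟨fun k => z k + (if (k : ℕ) < l₀ then (1 : ℝ) else 0) / (2 * α), l₀, hl₀, ?_⟩
    have h1 : ∑ k : Fin n,
        (z k + (if (k : ℕ) < l₀ then (1 : ℝ) else 0) / (2 * α))
          * (if (k : ℕ) < l₀ then (1 : ℝ) else 0)
        = (∑ k : Fin n, if (k : ℕ) < l₀ then z k else 0)
          + (1 / (2 * α)) * ∑ k : Fin n, (if (k : ℕ) < l₀ then (1 : ℝ) else 0) := by
      rw [Finset.mul_sum, ← Finset.sum_add_distrib]
      apply Finset.sum_congr rfl; intro k _; split_ifs <;> field_simp <;> ring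
    have h2 : ∑ k : Fin n,
        ((z k + (if (k : ℕ) < l₀ then (1 : ℝ) else 0) / (2 * α)) - z k) ^ 2
        = (1 / (4 * α ^ 2)) * ∑ k : Fin n, (if (k : ℕ) < l₀ then (1 : ℝ) else 0) := by
      rw [Finset.mul_sum]
      apply Finset.sum_congr rfl; intro k _; split_ifs <;> field_simp <;> ring
    rw [hsup, h1, h2, sum_ind n l₀ hl₀, sum_diff_sq n l₀ m hl₀ hm, hF, sum_ind_z n m z]
    field_simp
    ring
  · -- upper bound
    rintro v ⟨u, l, hl, rfl⟩
    have key : ∀ k : Fin n,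
        u k * (if (k : ℕ) < l then (1 : ℝ) else 0) - α * (u k - z k) ^ 2
          ≤ z k * (if (k : ℕ) < l then (1 : ℝ) else 0)
            + (if (k : ℕ) < l then (1 : ℝ) else 0) / (4 * α) := by
      intro k
      split_ifs with h
      · have hq : z k + 1 / (4 * α) - (u k * 1 - α * (u k - z k) ^ 2)
            = (2 * α * (u k - z k) - 1) ^ 2 / (4 * α) := by
          field_simp; ring
        have h0 := div_nonneg (sq_nonneg (2 * α * (u k - z k) - 1)) (by linarith : (0:ℝ) ≤ 4 * α)
        rw [← hq] at h0
        linarith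
      · have h0 := mul_nonneg hα.le (sq_nonneg (u k - z k))
        simp only [mul_zero, zero_div]
        linarith
    have hsum : (∑ k : Fin n, u k * (if (k : ℕ) < l then (1 : ℝ) else 0))
          - α * ∑ k, (u k - z k) ^ 2
        ≤ (∑ k : Fin n, if (k : ℕ) < l then z k else 0) + (l : ℝ) / (4 * α) := by
      have h := Finset.sum_le_sum (fun k (_ : k ∈ Finset.univ) => key k)
      rw [Finset.sum_sub_distrib, ← Finset.mul_sum, Finset.sum_add_distrib,
        sum_ind_z n l z, ← Finset.sum_div, sum_ind n l hl] at h
      exact h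
    have hFl : F l ≤ (Finset.range (n + 1)).sup' Finset.nonempty_range_add_one F :=
      Finset.le_sup' F (Finset.mem_range_succ_iff.mpr hl)
    have hFleq : F l = (l : ℝ) / (4 * α)
        + ((∑ k : Fin n, if (k : ℕ) < l then z k else 0)
            - ∑ k : Fin n, if (k : ℕ) < m then z k else 0)
        - α * S * |(l : ℝ) - (m : ℝ)| := rfl
    have hz : ∑ k : Fin n, z k * (if (k : ℕ) < m then (1 : ℝ) else 0)
        = ∑ k : Fin n, if (k : ℕ) < m then z k else 0 := sum_ind_z n m z
    rw [sum_diff_sq n l m hl hm, hz]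
    calc (∑ k : Fin n, u k * (if (k : ℕ) < l then (1 : ℝ) else 0))
          - α * ((∑ k, (u k - z k) ^ 2) + S * |(l : ℝ) - (m : ℝ)|)
        = ((∑ k : Fin n, u k * (if (k : ℕ) < l then (1 : ℝ) else 0))
            - α * ∑ k, (u k - z k) ^ 2) - α * S * |(l : ℝ) - (m : ℝ)| := by ring
      _ ≤ ((∑ k : Fin n, if (k : ℕ) < l then z k else 0) + (l : ℝ) / (4 * α))
            - α * S * |(l : ℝ) - (m : ℝ)| := by linarith
      _ = (∑ k : Fin n, if (k : ℕ) < m then z k else 0) + F l := by rw [hFleq]; ring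
      _ ≤ (∑ k : Fin n, if (k : ℕ) < m then z k else 0)
            + (Finset.range (n + 1)).sup' Finset.nonempty_range_add_one F := by linarith
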